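/- For every n ≥ 1, the range of the linear map A_{n,1/2} is exactly the subspace {ν ∈ ℝ^{{0,1}^n} : ν(ρ) = ν(−ρ) for all ρ ∈ {0,1}^n}, where −ρ denotes the binary string obtained from ρ by switching all zeros and ones. -/

import Mathlib

open Finset

/-- The divide-and-color matrix `A_{n,p}`: entry at configuration `ρ` and partition `σ` is
`p^{c(σ,ρ)}(1-p)^{‖σ‖-c(σ,ρ)}` if `ρ` is constant on every block of `σ`, and `0` otherwise. -/
noncomputable def colorMatrix (n : ℕ) (p : ℝ) :
    Matrix (Fin n → Bool) (Finpartition (univ : Finset (Fin n))) ℝ :=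
  fun ρ σ =>
    if ∀ B ∈ σ.parts, ∀ i ∈ B, ∀ j ∈ B, ρ i = ρ j then
      p ^ (σ.parts.filter (fun B => ∀ i ∈ B, ρ i = true)).card *
        (1 - p) ^ (σ.parts.card - (σ.parts.filter (fun B => ∀ i ∈ B, ρ i = true)).card)
    else 0

/-- The induced linear map `A_{n,p} : ℝ^{B_n} → ℝ^{{0,1}^n}`. -/
noncomputable def colorMap (n : ℕ) (p : ℝ) :
    ((Finpartition (univ : Finset (Fin n))) → ℝ) →ₗ[ℝ] ((Fin n → Bool) → ℝ) :=
  (colorMatrix n p).mulVecLin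

lemma colorMatrix_half {n : ℕ} (ρ : Fin n → Bool) (σ : Finpartition (univ : Finset (Fin n))) :
    colorMatrix n (1/2) ρ σ =
      if ∀ B ∈ σ.parts, ∀ i ∈ B, ∀ j ∈ B, ρ i = ρ j then (1/2 : ℝ) ^ σ.parts.card else 0 := by
  simp only [colorMatrix]
  split
  · rw [show (1:ℝ) - 1/2 = 1/2 by norm_num, ← pow_add,
      Nat.add_sub_cancel' (Finset.card_filter_le _ _)]
  · rfl

/-- The setoid on `Fin n` induced by a coloring. -/
def colorSetoid {n : ℕ} (ρ : Fin n → Bool) : Setoid (Fin n) :=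
  ⟨fun i j => ρ i = ρ j, ⟨fun _ => rfl, Eq.symm, Eq.trans⟩⟩

instance {n : ℕ} (ρ : Fin n → Bool) : DecidableRel (colorSetoid ρ).r :=
  fun _ _ => instDecidableEqBool _ _

/-- The partition of `Fin n` induced by a coloring. -/
def partOf {n : ℕ} (ρ : Fin n → Bool) : Finpartition (univ : Finset (Fin n)) :=
  Finpartition.ofSetoid (colorSetoid ρ)

lemma cond_partOf {n : ℕ} (ρ ρ' : Fin n → Bool) :
    (∀ B ∈ (partOf ρ).parts, ∀ i ∈ B, ∀ j ∈ B, ρ' i = ρ' j) ↔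
      ∀ i j, ρ i = ρ j → ρ' i = ρ' j := by
  constructor
  · intro h i j hij
    exact h _ ((partOf ρ).part_mem.mpr (mem_univ i)) i ((partOf ρ).mem_part (mem_univ i)) j
      (Finpartition.mem_part_ofSetoid_iff_rel.mpr hij)
  · intro h B hB i hi j hj
    have hBi : (partOf ρ).part i = B := (partOf ρ).part_eq_of_mem hB hi
    exact h i j (Finpartition.mem_part_ofSetoid_iff_rel.mp (hBi ▸ hj))

open scoped Classical in
lemma colorMap_single {n : ℕ} (σ₀ : Finpartition (univ : Finset (Fin n))) :
    colorMap n (1/2) (fun τ => if τ = σ₀ then (2:ℝ) ^ σ₀.parts.card else 0) =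
      fun ρ => if ∀ B ∈ σ₀.parts, ∀ i ∈ B, ∀ j ∈ B, ρ i = ρ j then 1 else 0 := by
  funext ρ
  have : colorMap n (1/2) (fun τ => if τ = σ₀ then (2:ℝ) ^ σ₀.parts.card else 0) ρ
      = colorMatrix n (1/2) ρ σ₀ * (2:ℝ) ^ σ₀.parts.card := by
    simp [colorMap, Matrix.mulVecLin_apply, Matrix.mulVec, dotProduct, mul_ite, mul_zero,
      Finset.sum_ite_eq']
  rw [this, colorMatrix_half]
  split
  · rw [← mul_pow]; norm_num
  · rw [zero_mul]

lemma nonconst_char {n : ℕ} {ρ : Fin n → Bool} (hne : ¬ ∀ i j, ρ i = ρ j)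
    (ρ' : Fin n → Bool) :
    (∀ i j, ρ i = ρ j → ρ' i = ρ' j) ↔
      (ρ' = ρ ∨ ρ' = (fun i => !(ρ i)) ∨ ∀ i j, ρ' i = ρ' j) := by
  push_neg at hne
  obtain ⟨i, j, hij⟩ := hne
  -- get a point where ρ is true and one where it is false
  obtain ⟨it, ifl, ht, hf⟩ : ∃ it ifl, ρ it = true ∧ ρ ifl = false := by
    cases hi : ρ i with
    | true => exact ⟨i, j, hi, by cases hj : ρ j <;> simp_all⟩
    | false => exact ⟨j, i, by cases hj : ρ j <;> simp_all, hi⟩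
  constructor
  · intro h
    have key : ∀ k, ρ' k = if ρ k then ρ' it else ρ' ifl := by
      intro k
      cases hk : ρ k with
      | true => simpa using h k it (hk.trans ht.symm)
      | false => simpa using h k ifl (hk.trans hf.symm)
    cases h1 : ρ' it with
    | true =>
      cases h2 : ρ' ifl with
      | true =>
        refine Or.inr (Or.inr fun k l => ?_)
        rw [key k, key l]; cases hk : ρ k <;> cases hl : ρ l <;> simp [h1, h2]
      | false =>
        refine Or.inl (funext fun k => ?_)
        rw [key k]; cases hk : ρ k <;> simp [h1, h2]
    | false =>
      cases h2 : ρ' ifl with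
      | true =>
        refine Or.inr (Or.inl (funext fun k => ?_))
        rw [key k]; cases hk : ρ k <;> simp [h1, h2]
      | false =>
        refine Or.inr (Or.inr fun k l => ?_)
        rw [key k, key l]; cases hk : ρ k <;> cases hl : ρ l <;> simp [h1, h2]
  · rintro (rfl | rfl | hc) i j hij
    · exact hij
    · simp [hij]
    · exact hc i j

lemma flip_ne {n : ℕ} (hn : 1 ≤ n) (ρ : Fin n → Bool) : ρ ≠ fun i => !(ρ i) := by
  intro h
  have := congrFun h ⟨0, hn⟩
  simp at this

lemma pair_mem {n : ℕ} (hn : 1 ≤ n) (ρ : Fin n → Bool) :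
    (fun ρ' => (if ρ' = ρ then (1:ℝ) else 0) + if ρ' = (fun i => !(ρ i)) then 1 else 0) ∈
      LinearMap.range (colorMap n (1/2)) := by
  classical
  by_cases hconst : ∀ i j, ρ i = ρ j
  · refine ⟨(fun τ => if τ = partOf ρ then (2:ℝ) ^ (partOf ρ).parts.card else 0), ?_⟩
    rw [colorMap_single]
    funext ρ'
    simp only [cond_partOf]
    by_cases h1 : ρ' = ρ
    · have h2 : ρ' ≠ fun i => !(ρ i) := h1 ▸ flip_ne hn ρ
      have : ∀ i j, ρ i = ρ j → ρ' i = ρ' j := fun i j _ => h1 ▸ hconst i j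
      simp [h1, h2, this, flip_ne hn ρ, (flip_ne hn ρ).symm]
    · by_cases h2 : ρ' = fun i => !(ρ i)
      · have : ∀ i j, ρ i = ρ j → ρ' i = ρ' j := fun i j _ => by
          rw [h2]; simp [hconst i j]
        simp [h1, h2, this, flip_ne hn ρ, (flip_ne hn ρ).symm]
      · have : ¬ ∀ i j, ρ i = ρ j → ρ' i = ρ' j := by
          intro h
          -- ρ' would be constant, hence equal to ρ or its flip
          have hc : ∀ i j, ρ' i = ρ' j := fun i j => h i j (hconst i j)
          set i₀ : Fin n := ⟨0, hn⟩
          by_cases hv : ρ' i₀ = ρ i₀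
          · exact h1 (funext fun k => (hc k i₀).trans (hv.trans (hconst i₀ k)))
          · have hv' : ρ' i₀ = !(ρ i₀) := by
              cases hx : ρ' i₀ <;> cases hy : ρ i₀ <;> simp_all
            exact h2 (funext fun k => (hc k i₀).trans (hv'.trans (by simp [hconst i₀ k])))
        simp [h1, h2, this]
  · refine ⟨(fun τ => if τ = partOf ρ then (2:ℝ) ^ (partOf ρ).parts.card else 0) -
      (fun τ => if τ = partOf (fun _ => true) then
        (2:ℝ) ^ (partOf (fun _ => true : Fin n → Bool)).parts.card else 0), ?_⟩
    rw [map_sub, colorMap_single, colorMap_single]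
    funext ρ'
    simp only [Pi.sub_apply]
    simp only [cond_partOf]
    have hcc : (∀ i j : Fin n, (fun _ : Fin n => true) i = (fun _ : Fin n => true) j →
        ρ' i = ρ' j) ↔ ∀ i j, ρ' i = ρ' j :=
      ⟨fun h i j => h i j rfl, fun h i j _ => h i j⟩
    simp only [hcc, nonconst_char hconst]
    have hflip : ρ ≠ fun i => !(ρ i) := flip_ne hn ρ
    by_cases hc : ∀ i j, ρ' i = ρ' j
    · have h1 : ρ' ≠ ρ := fun h => hconst (h ▸ hc)
      have h2 : ρ' ≠ fun i => !(ρ i) := by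
        intro h
        exact hconst fun i j => by
          have := hc i j; rw [h] at this; simpa using this
      simp [h1, h2, hc]
    · by_cases h1 : ρ' = ρ
      · have h2 : ρ' ≠ fun i => !(ρ i) := h1 ▸ hflip
        simp [h1, h2, hc, hconst, hflip, hflip.symm]
      · by_cases h2 : ρ' = fun i => !(ρ i)
        · simp [h1, h2, hc, hconst, hflip, hflip.symm]
        · simp [h1, h2, hc, hconst, hflip, hflip.symm]

/-- for `n ≥ 1`, the range of `A_{n,1/2}` is exactly the subspace of
`{0,1}`-symmetric vectors `ν`, i.e. those with `ν(ρ) = ν(-ρ)` for all `ρ`. -/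
theorem range_colorMap_half (n : ℕ) (hn : 1 ≤ n) :
    (LinearMap.range (colorMap n (1/2)) : Set ((Fin n → Bool) → ℝ)) =
      {ν : (Fin n → Bool) → ℝ | ∀ ρ : Fin n → Bool, ν ρ = ν (fun i => !(ρ i))} := by
  classical
  ext ν
  constructor
  · rintro ⟨x, rfl⟩ ρ
    have hM : ∀ σ, colorMatrix n (1/2) ρ σ = colorMatrix n (1/2) (fun i => !(ρ i)) σ := by
      intro σ
      rw [colorMatrix_half, colorMatrix_half]
      refine if_congr ?_ rfl rfl
      constructor <;> intro h B hB i hi j hj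
      · exact congrArg Bool.not (h B hB i hi j hj)
      · have h2 := h B hB i hi j hj
        cases hx : ρ i <;> cases hy : ρ j <;> rw [hx, hy] at h2 <;> simp_all
    show (colorMap n (1/2)) x ρ = (colorMap n (1/2)) x (fun i => !(ρ i))
    simp only [colorMap, Matrix.mulVecLin_apply, Matrix.mulVec, dotProduct]
    exact Finset.sum_congr rfl fun σ _ => by rw [hM σ]
  · intro hν
    have hsum : ν = ∑ ρ : Fin n → Bool, (ν ρ / 2) •
        (fun ρ' => (if ρ' = ρ then (1:ℝ) else 0) + if ρ' = (fun i => !(ρ i)) then 1 else 0) := by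
      funext ρ'
      rw [Finset.sum_apply]
      simp only [Pi.smul_apply, smul_eq_mul, mul_add]
      rw [Finset.sum_add_distrib]
      have e1 : ∑ ρ : Fin n → Bool, (ν ρ / 2) * (if ρ' = ρ then (1:ℝ) else 0) = ν ρ' / 2 := by
        have h1 : ∀ ρ : Fin n → Bool,
            (ν ρ / 2) * (if ρ' = ρ then (1:ℝ) else 0) = if ρ = ρ' then ν ρ / 2 else 0 := by
          intro ρ
          by_cases h : ρ = ρ'
          · simp [h]
          · rw [if_neg (fun hh => h hh.symm), if_neg h, mul_zero]
        rw [Finset.sum_congr rfl fun ρ _ => h1 ρ]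
        simp
      have e2 : ∑ ρ : Fin n → Bool, (ν ρ / 2) * (if ρ' = (fun i => !(ρ i)) then (1:ℝ) else 0)
          = ν (fun i => !(ρ' i)) / 2 := by
        have key : ∀ ρ : Fin n → Bool, (ρ' = fun i => !(ρ i)) ↔ (ρ = fun i => !(ρ' i)) := by
          intro ρ
          constructor <;> intro h <;> funext i
          · rw [show ρ' i = !(ρ i) from congrFun h i, Bool.not_not]
          · rw [show ρ i = !(ρ' i) from congrFun h i, Bool.not_not]
        have h1 : ∀ ρ : Fin n → Bool,
            (ν ρ / 2) * (if ρ' = (fun i => !(ρ i)) then (1:ℝ) else 0)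
              = if ρ = (fun i => !(ρ' i)) then ν ρ / 2 else 0 := by
          intro ρ
          by_cases h : ρ' = fun i => !(ρ i)
          · rw [if_pos h, if_pos ((key ρ).mp h), mul_one]
          · rw [if_neg h, if_neg (fun hh => h ((key ρ).mpr hh)), mul_zero]
        rw [Finset.sum_congr rfl fun ρ _ => h1 ρ]
        simp
      rw [e1, e2, ← hν ρ']
      ring
    rw [SetLike.mem_coe, hsum]
    exact Submodule.sum_mem _ fun ρ _ => Submodule.smul_mem _ _ (pair_mem hn ρ)
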